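/- Let P, P' : S → PMF S be two transition functions with support(P' s) ⊆ support(P s) for every s ∈ S, and let μ_s and μ'_s be the corresponding path measures started at s. Then for every s ∈ S, μ_s(Safe) = 1 implies μ'_s(Safe) = 1. -/

import Mathlib

open MeasureTheory Set
open scoped ENNReal Classical

variable {S : Type*}

def IsPathMeasure [MeasurableSpace S] (P : S → PMF S) (μ : S → Measure (ℕ → S)) : Prop :=
  (∀ s, IsProbabilityMeasure (μ s)) ∧
    ∀ (s : S) (n : ℕ) (x : ℕ → S),
      μ s {ω | ∀ i ≤ n, ω i = x i} =
        (if x 0 = s then 1 else 0) * ∏ i ∈ Finset.range n, (P (x i)) (x (i + 1))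

noncomputable def Rw (Acc : Set S) (γacc rn : ℝ) (s : S) : ℝ :=
  if s ∈ Acc then (1 - γacc) * rn else 0

noncomputable def Γw (Acc : Set S) (γacc γ : ℝ) (s : S) : ℝ :=
  if s ∈ Acc then γacc else γ

noncomputable def Ret (Acc : Set S) (γacc γ rn : ℝ) (ω : ℕ → S) : ℝ :=
  ∑' t : ℕ, Rw Acc γacc rn (ω (t + 1)) * ∏ k ∈ Finset.range t, Γw Acc γacc γ (ω (k + 1))

noncomputable def Val [MeasurableSpace S] (Acc : Set S) (γacc γ rn : ℝ)
    (μ : S → Measure (ℕ → S)) (s : S) : ℝ :=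
  ∫ ω, Ret Acc γacc γ rn ω ∂ (μ s)

/-- almost-sure safety depends only on the supports of the transition
kernel: shrinking supports preserves almost-sure safety. -/
theorem safe_ae_of_support_subset
    [Fintype S] [Nonempty S] [MeasurableSpace S] [MeasurableSingletonClass S]
    (P P' : S → PMF S) (hsupp : ∀ s, (P' s).support ⊆ (P s).support)
    (Acc : Set S) (μ μ' : S → Measure (ℕ → S))
    (hμ : IsPathMeasure P μ) (hμ' : IsPathMeasure P' μ') (s : S)
    (hs : μ s {ω | ∀ t, ω t ∉ Acc} = 1) :
    μ' s {ω | ∀ t, ω t ∉ Acc} = 1 := by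
  obtain ⟨hprob, hcyl⟩ := hμ
  obtain ⟨hprob', hcyl'⟩ := hμ'
  haveI := hprob s
  haveI := hprob' s
  have hAcc : MeasurableSet Acc := Acc.toFinite.measurableSet
  have hSafe : MeasurableSet {ω : ℕ → S | ∀ t, ω t ∉ Acc} := by
    have h : {ω : ℕ → S | ∀ t, ω t ∉ Acc} = ⋂ t, (fun ω : ℕ → S => ω t) ⁻¹' Accᶜ := by
      ext ω; simp [Set.mem_iInter]
    rw [h]
    exact MeasurableSet.iInter fun t => (measurable_pi_apply t) hAcc.compl
  have hcompl : μ s {ω : ℕ → S | ∀ t, ω t ∉ Acc}ᶜ = 0 := by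
    rw [prob_compl_eq_zero_iff hSafe]; exact hs
  -- transfer nullity of cylinders from μ to μ'
  have key : ∀ (n : ℕ) (x : ℕ → S), μ s {ω | ∀ i ≤ n, ω i = x i} = 0 →
      μ' s {ω | ∀ i ≤ n, ω i = x i} = 0 := by
    intro n x h0
    rw [hcyl s n x] at h0
    rw [hcyl' s n x]
    rcases mul_eq_zero.1 h0 with h | h
    · rw [h, zero_mul]
    · obtain ⟨i, hi, hPi⟩ := Finset.prod_eq_zero_iff.1 h
      have hz : (P' (x i)) (x (i + 1)) = 0 := by
        rw [PMF.apply_eq_zero_iff]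
        intro hmem
        exact ((P (x i)).mem_support_iff _).1 (hsupp (x i) hmem) hPi
      rw [Finset.prod_eq_zero hi hz, mul_zero]
  -- each time-t bad set is μ'-null
  have hbad : ∀ t : ℕ, μ' s {ω : ℕ → S | ω t ∈ Acc} = 0 := by
    intro t
    set ext : (Fin (t + 1) → S) → ℕ → S :=
      fun y j => if h : j < t + 1 then y ⟨j, h⟩ else Classical.arbitrary S with hext
    have hsub : {ω : ℕ → S | ω t ∈ Acc} ⊆
        ⋃ y ∈ Finset.filter (fun y : Fin (t + 1) → S => y ⟨t, Nat.lt_succ_self t⟩ ∈ Acc)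
          Finset.univ, {ω : ℕ → S | ∀ i ≤ t, ω i = ext y i} := by
      intro ω hω
      refine Set.mem_iUnion₂.2 ⟨fun j => ω j, ?_, ?_⟩
      · simpa using hω
      · intro i hi
        simp [hext, Nat.lt_succ_of_le hi, Nat.not_lt.2 hi]
    refine measure_mono_null hsub (measure_biUnion_null_iff (Set.to_countable _) |>.2 ?_)
    intro y hy
    have hy' : y ⟨t, Nat.lt_succ_self t⟩ ∈ Acc := (Finset.mem_filter.1 (Finset.mem_coe.1 hy)).2
    apply key
    have hsub2 : {ω : ℕ → S | ∀ i ≤ t, ω i = ext y i} ⊆ {ω : ℕ → S | ∀ t, ω t ∉ Acc}ᶜ := by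
      intro ω hω
      simp only [Set.mem_compl_iff, Set.mem_setOf_eq, not_forall, not_not]
      refine ⟨t, ?_⟩
      have := hω t le_rfl
      rw [this]
      simpa [hext, Nat.lt_succ_self t] using hy'
    exact measure_mono_null hsub2 hcompl
  rw [← prob_compl_eq_zero_iff hSafe]
  have hU : {ω : ℕ → S | ∀ t, ω t ∉ Acc}ᶜ = ⋃ t, {ω : ℕ → S | ω t ∈ Acc} := by
    ext ω; simp
  rw [hU]
  exact measure_iUnion_null hbad
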